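/- Let I be a monomial ideal in ℝ[x,y,z] minimally generated by monomials of the forms x^{i} z^{λ_i} (for i in a set A of nonnegative integers) and y^{j} z^{η_j} (for j in a set B), where the exponents λ and η are strictly decreasing in i and j respectively. If x^{i} y^{j} z^{t} and x^{i'} y^{j} z^{t} are both lcm's of triples of minimal generators corresponding to bounded faces of the Buchberger graph, with i' > i, then the monomial x^{i} z^{t}, if it lies in I, divides lcm(x^{i'} z^{t}, y^{j} z^{t'}) for appropriate t' ≤ t, contradicting minimality; hence no two generators of the third syzygy of I have the same z-degree. -/
import Mathlib


/-- Componentwise divisibility of monomials in three variables, recorded as exponent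
vectors in `ℕ × ℕ × ℕ`. -/
def dvd3 (u v : ℕ × ℕ × ℕ) : Prop :=
  u.1 ≤ v.1 ∧ u.2.1 ≤ v.2.1 ∧ u.2.2 ≤ v.2.2

/-- The lcm of two monomials, i.e. the componentwise max of exponent vectors. -/
def lcm3 (u v : ℕ × ℕ × ℕ) : ℕ × ℕ × ℕ :=
  (max u.1 v.1, max u.2.1 v.2.1, max u.2.2 v.2.2)

/-- Two generators form an edge of the Buchberger graph iff no other generator divides
their lcm. -/
def buchEdge (G : Set (ℕ × ℕ × ℕ)) (u v : ℕ × ℕ × ℕ) : Prop :=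
  ∀ w ∈ G, w ≠ u → w ≠ v → ¬ dvd3 w (lcm3 u v)

namespace S16

def swap3 (p : ℕ × ℕ × ℕ) : ℕ × ℕ × ℕ := (p.2.1, p.1, p.2.2)

lemma swap3_swap3 (p : ℕ × ℕ × ℕ) : swap3 (swap3 p) = p := rfl

lemma swap3_inj {p q : ℕ × ℕ × ℕ} (h : swap3 p = swap3 q) : p = q := by
  rw [← swap3_swap3 p, h, swap3_swap3]

lemma dvd3_swap3 {u v : ℕ × ℕ × ℕ} : dvd3 (swap3 u) (swap3 v) ↔ dvd3 u v := by
  unfold dvd3 swap3; dsimp; tauto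

lemma lcm3_swap3 (u v : ℕ × ℕ × ℕ) : lcm3 (swap3 u) (swap3 v) = swap3 (lcm3 u v) := rfl

lemma lcm3_comm (u v : ℕ × ℕ × ℕ) : lcm3 u v = lcm3 v u := by
  simp only [lcm3, Prod.mk.injEq]
  exact ⟨max_comm _ _, max_comm _ _, max_comm _ _⟩

lemma buchEdge_comm {G : Set (ℕ × ℕ × ℕ)} {u v : ℕ × ℕ × ℕ}
    (h : buchEdge G u v) : buchEdge G v u := by
  intro w hw h1 h2
  rw [lcm3_comm]
  exact h w hw h2 h1

lemma buchEdge_swap {G : Set (ℕ × ℕ × ℕ)} {u v : ℕ × ℕ × ℕ}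
    (h : buchEdge G u v) : buchEdge (swap3 '' G) (swap3 u) (swap3 v) := by
  rintro w ⟨w0, hw0, rfl⟩ h1 h2
  rw [lcm3_swap3, dvd3_swap3]
  exact h w0 hw0 (fun e => h1 (by rw [e])) (fun e => h2 (by rw [e]))

lemma swapG {A B : Set ℕ} {lam eta : ℕ → ℕ} {G : Set (ℕ × ℕ × ℕ)}
    (hG : G = {g | ∃ i ∈ A, g = (i, 0, lam i)} ∪ {g | ∃ j ∈ B, g = (0, j, eta j)}) :
    swap3 '' G = {g | ∃ j ∈ B, g = (j, 0, eta j)} ∪ {g | ∃ i ∈ A, g = (0, i, lam i)} := by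
  subst hG
  ext p
  constructor
  · rintro ⟨q, hq, rfl⟩
    rcases hq with ⟨i, hi, rfl⟩ | ⟨j, hj, rfl⟩
    · exact Or.inr ⟨i, hi, rfl⟩
    · exact Or.inl ⟨j, hj, rfl⟩
  · rintro (⟨j, hj, rfl⟩ | ⟨i, hi, rfl⟩)
    · exact ⟨(0, j, eta j), Or.inr ⟨j, hj, rfl⟩, rfl⟩
    · exact ⟨(i, 0, lam i), Or.inl ⟨i, hi, rfl⟩, rfl⟩

/-- The combinatorial data extracted from a bounded face with two `x`-type generators
`x^i z^{lam i}, x^{i'} z^{lam i'}` and one `y`-type generator `y^j z^{eta j}`. -/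
def Q (A B : Set ℕ) (lam eta : ℕ → ℕ) (i i' j : ℕ) : Prop :=
  i ∈ A ∧ i' ∈ A ∧ j ∈ B ∧ i < i' ∧ (∀ k ∈ A, i < k → i' ≤ k) ∧
    eta j < lam i ∧ (∀ l ∈ B, eta l < lam i → j ≤ l)

lemma core {A B : Set ℕ} {lam eta : ℕ → ℕ} (hlam : StrictAntiOn lam A)
    {G : Set (ℕ × ℕ × ℕ)}
    (hG : G = {g | ∃ i ∈ A, g = (i, 0, lam i)} ∪ {g | ∃ j ∈ B, g = (0, j, eta j)})
    {i i' j : ℕ} (hiA : i ∈ A) (hi'A : i' ∈ A) (hjB : j ∈ B) (hii' : i < i')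
    (hne : ((i : ℕ), (0 : ℕ), lam i) ≠ ((0 : ℕ), j, eta j))
    (e₁ : buchEdge G (i, 0, lam i) (i', 0, lam i'))
    (e₂ : buchEdge G (i, 0, lam i) (0, j, eta j))
    (e₃ : buchEdge G (i', 0, lam i') (0, j, eta j)) :
    Q A B lam eta i i' j := by
  have memX : ∀ k ∈ A, ((k : ℕ), (0 : ℕ), lam k) ∈ G := fun k hk => by
    rw [hG]; exact Set.mem_union_left _ ⟨k, hk, rfl⟩
  have memY : ∀ l ∈ B, ((0 : ℕ), l, eta l) ∈ G := fun l hl => by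
    rw [hG]; exact Set.mem_union_right _ ⟨l, hl, rfl⟩
  have h1 : eta j < lam i := by
    by_contra h
    push_neg at h
    refine e₃ (i, 0, lam i) (memX i hiA) ?_ hne ?_
    · intro he
      rw [Prod.mk.injEq] at he
      omega
    · refine ⟨?_, ?_, ?_⟩ <;> simp [lcm3] <;> omega
  have h2 : ∀ k ∈ A, i < k → i' ≤ k := by
    intro k hkA hik
    by_contra h
    push_neg at h
    have hlt : lam k < lam i := hlam hiA hkA hik
    refine e₁ (k, 0, lam k) (memX k hkA) ?_ ?_ ?_
    · intro he; rw [Prod.mk.injEq] at he; omega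
    · intro he; rw [Prod.mk.injEq] at he; omega
    · refine ⟨?_, ?_, ?_⟩ <;> simp [lcm3] <;> omega
  have h3 : ∀ l ∈ B, eta l < lam i → j ≤ l := by
    intro l hlB hl
    by_contra h
    push_neg at h
    refine e₂ (0, l, eta l) (memY l hlB) ?_ ?_ ?_
    · intro he
      rw [Prod.mk.injEq, Prod.mk.injEq] at he
      omega
    · intro he; rw [Prod.mk.injEq, Prod.mk.injEq] at he; omega
    · refine ⟨?_, ?_, ?_⟩ <;> simp [lcm3] <;> omega
  exact ⟨hiA, hi'A, hjB, hii', h2, h1, h3⟩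

lemma mid {A B : Set ℕ} {lam eta : ℕ → ℕ} (hlam : StrictAntiOn lam A)
    {G : Set (ℕ × ℕ × ℕ)}
    (hG : G = {g | ∃ i ∈ A, g = (i, 0, lam i)} ∪ {g | ∃ j ∈ B, g = (0, j, eta j)})
    {a b c : ℕ} (haA : a ∈ A) (hbA : b ∈ A) (hcA : c ∈ A)
    (hab : a < b) (hbc : b < c)
    (e : buchEdge G (a, 0, lam a) (c, 0, lam c)) : False := by
  have hmem : ((b : ℕ), (0 : ℕ), lam b) ∈ G := by
    rw [hG]; exact Set.mem_union_left _ ⟨b, hbA, rfl⟩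
  have hlt : lam b < lam a := hlam haA hbA hab
  refine e (b, 0, lam b) hmem ?_ ?_ ?_
  · intro he; rw [Prod.mk.injEq] at he; omega
  · intro he; rw [Prod.mk.injEq] at he; omega
  · refine ⟨?_, ?_, ?_⟩ <;> simp [lcm3] <;> omega

lemma noXXX {A B : Set ℕ} {lam eta : ℕ → ℕ} (hlam : StrictAntiOn lam A)
    {G : Set (ℕ × ℕ × ℕ)}
    (hG : G = {g | ∃ i ∈ A, g = (i, 0, lam i)} ∪ {g | ∃ j ∈ B, g = (0, j, eta j)})
    {a b c : ℕ} (haA : a ∈ A) (hbA : b ∈ A) (hcA : c ∈ A)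
    (hab : a ≠ b) (hac : a ≠ c) (hbc : b ≠ c)
    (e₁ : buchEdge G (a, 0, lam a) (b, 0, lam b))
    (e₂ : buchEdge G (a, 0, lam a) (c, 0, lam c))
    (e₃ : buchEdge G (b, 0, lam b) (c, 0, lam c)) : False := by
  rcases lt_trichotomy a b with h1 | h1 | h1
  · rcases lt_trichotomy b c with h2 | h2 | h2
    · exact mid hlam hG haA hbA hcA h1 h2 e₂
    · exact hbc h2
    · rcases lt_trichotomy a c with h3 | h3 | h3
      · exact mid hlam hG haA hcA hbA h3 h2 e₁
      · exact hac h3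
      · exact mid hlam hG hcA haA hbA h3 h1 (buchEdge_comm e₃)
  · exact hab h1
  · rcases lt_trichotomy a c with h2 | h2 | h2
    · exact mid hlam hG hbA haA hcA h1 h2 e₃
    · exact hac h2
    · rcases lt_trichotomy b c with h3 | h3 | h3
      · exact mid hlam hG hbA hcA haA h3 h2 (buchEdge_comm e₁)
      · exact hbc h3
      · exact mid hlam hG hcA hbA haA h3 h1 (buchEdge_comm e₂)

lemma caseXXY {A B : Set ℕ} {lam eta : ℕ → ℕ} (hlam : StrictAntiOn lam A)
    {G : Set (ℕ × ℕ × ℕ)}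
    (hG : G = {g | ∃ i ∈ A, g = (i, 0, lam i)} ∪ {g | ∃ j ∈ B, g = (0, j, eta j)})
    {a b j : ℕ} (haA : a ∈ A) (hbA : b ∈ A) (hjB : j ∈ B)
    (hne_ab : ((a : ℕ), (0 : ℕ), lam a) ≠ ((b : ℕ), (0 : ℕ), lam b))
    (hne_aj : ((a : ℕ), (0 : ℕ), lam a) ≠ ((0 : ℕ), j, eta j))
    (hne_bj : ((b : ℕ), (0 : ℕ), lam b) ≠ ((0 : ℕ), j, eta j))
    (eab : buchEdge G (a, 0, lam a) (b, 0, lam b))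
    (eaj : buchEdge G (a, 0, lam a) (0, j, eta j))
    (ebj : buchEdge G (b, 0, lam b) (0, j, eta j)) :
    ∃ i i', Q A B lam eta i i' j ∧ i' = max a b ∧ lam i = max (lam a) (lam b) := by
  rcases lt_trichotomy a b with h | h | h
  · have hQ := core hlam hG haA hbA hjB h hne_aj eab eaj ebj
    have := hlam haA hbA h
    exact ⟨a, b, hQ, by omega, by omega⟩
  · exact absurd (by rw [h]) hne_ab
  · have hQ := core hlam hG hbA haA hjB h hne_bj (buchEdge_comm eab) ebj eaj
    have := hlam hbA haA h
    exact ⟨b, a, hQ, by omega, by omega⟩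


lemma extract {A B : Set ℕ} {lam eta : ℕ → ℕ}
    (hlam : StrictAntiOn lam A) (heta : StrictAntiOn eta B)
    {G : Set (ℕ × ℕ × ℕ)}
    (hG : G = {g | ∃ i ∈ A, g = (i, 0, lam i)} ∪ {g | ∃ j ∈ B, g = (0, j, eta j)})
    {u₁ u₂ u₃ : ℕ × ℕ × ℕ} (m1 : u₁ ∈ G) (m2 : u₂ ∈ G) (m3 : u₃ ∈ G)
    (d12 : u₁ ≠ u₂) (d13 : u₁ ≠ u₃) (d23 : u₂ ≠ u₃)
    (e12 : buchEdge G u₁ u₂) (e13 : buchEdge G u₁ u₃) (e23 : buchEdge G u₂ u₃) :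
    (∃ i i' j, Q A B lam eta i i' j ∧ lcm3 u₁ (lcm3 u₂ u₃) = (i', j, lam i)) ∨
    (∃ j j' i, Q B A eta lam j j' i ∧ lcm3 u₁ (lcm3 u₂ u₃) = (i, j', eta j)) := by
  have hG' := swapG hG
  rw [hG] at m1 m2 m3
  simp only [Set.mem_union, Set.mem_setOf_eq] at m1 m2 m3
  rcases m1 with ⟨a, haA, rfl⟩ | ⟨a, haB, rfl⟩ <;>
    rcases m2 with ⟨b, hbA, rfl⟩ | ⟨b, hbB, rfl⟩ <;>
      rcases m3 with ⟨c, hcA, rfl⟩ | ⟨c, hcB, rfl⟩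
  -- XXX
  · have hab : a ≠ b := fun h => d12 (by rw [h])
    have hac : a ≠ c := fun h => d13 (by rw [h])
    have hbc : b ≠ c := fun h => d23 (by rw [h])
    exact (noXXX (B := B) (eta := eta) hlam hG haA hbA hcA hab hac hbc e12 e13 e23).elim
  -- XXY
  · obtain ⟨i, i', hQ, hm1, hm2⟩ :=
      caseXXY hlam hG haA hbA hcB d12 d13 d23 e12 e13 e23
    refine Or.inl ⟨i, i', c, hQ, ?_⟩
    have hej := hQ.2.2.2.2.2.1
    simp only [lcm3, Prod.mk.injEq]
    refine ⟨?_, ?_, ?_⟩ <;> omega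
  -- XYX
  · obtain ⟨i, i', hQ, hm1, hm2⟩ :=
      caseXXY hlam hG haA hcA hbB d13 d12 d23.symm e13 e12 (buchEdge_comm e23)
    refine Or.inl ⟨i, i', b, hQ, ?_⟩
    have hej := hQ.2.2.2.2.2.1
    simp only [lcm3, Prod.mk.injEq]
    refine ⟨?_, ?_, ?_⟩ <;> omega
  -- XYY
  · obtain ⟨j, j', hQ, hm1, hm2⟩ :=
      caseXXY heta hG' hbB hcB haA
        (fun h => d23 (swap3_inj (p := (0, b, eta b)) (q := (0, c, eta c)) h))
        (fun h => d12 (swap3_inj (p := (0, b, eta b)) (q := (a, 0, lam a)) h).symm)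
        (fun h => d13 (swap3_inj (p := (0, c, eta c)) (q := (a, 0, lam a)) h).symm)
        (buchEdge_swap e23) (buchEdge_swap (buchEdge_comm e12))
        (buchEdge_swap (buchEdge_comm e13))
    refine Or.inr ⟨j, j', a, hQ, ?_⟩
    have hej := hQ.2.2.2.2.2.1
    simp only [lcm3, Prod.mk.injEq]
    refine ⟨?_, ?_, ?_⟩ <;> omega
  -- YXX
  · obtain ⟨i, i', hQ, hm1, hm2⟩ :=
      caseXXY hlam hG hbA hcA haB d23 d12.symm d13.symm e23
        (buchEdge_comm e12) (buchEdge_comm e13)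
    refine Or.inl ⟨i, i', a, hQ, ?_⟩
    have hej := hQ.2.2.2.2.2.1
    simp only [lcm3, Prod.mk.injEq]
    refine ⟨?_, ?_, ?_⟩ <;> omega
  -- YXY
  · obtain ⟨j, j', hQ, hm1, hm2⟩ :=
      caseXXY heta hG' haB hcB hbA
        (fun h => d13 (swap3_inj (p := (0, a, eta a)) (q := (0, c, eta c)) h))
        (fun h => d12 (swap3_inj (p := (0, a, eta a)) (q := (b, 0, lam b)) h))
        (fun h => d23 (swap3_inj (p := (0, c, eta c)) (q := (b, 0, lam b)) h).symm)
        (buchEdge_swap e13) (buchEdge_swap e12)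
        (buchEdge_swap (buchEdge_comm e23))
    refine Or.inr ⟨j, j', b, hQ, ?_⟩
    have hej := hQ.2.2.2.2.2.1
    simp only [lcm3, Prod.mk.injEq]
    refine ⟨?_, ?_, ?_⟩ <;> omega
  -- YYX
  · obtain ⟨j, j', hQ, hm1, hm2⟩ :=
      caseXXY heta hG' haB hbB hcA
        (fun h => d12 (swap3_inj (p := (0, a, eta a)) (q := (0, b, eta b)) h))
        (fun h => d13 (swap3_inj (p := (0, a, eta a)) (q := (c, 0, lam c)) h))
        (fun h => d23 (swap3_inj (p := (0, b, eta b)) (q := (c, 0, lam c)) h))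
        (buchEdge_swap e12) (buchEdge_swap e13) (buchEdge_swap e23)
    refine Or.inr ⟨j, j', c, hQ, ?_⟩
    have hej := hQ.2.2.2.2.2.1
    simp only [lcm3, Prod.mk.injEq]
    refine ⟨?_, ?_, ?_⟩ <;> omega
  -- YYY
  · have hab : a ≠ b := fun h => d12 (by rw [h])
    have hac : a ≠ c := fun h => d13 (by rw [h])
    have hbc : b ≠ c := fun h => d23 (by rw [h])
    exact (noXXX (B := A) (eta := lam) heta hG' haB hbB hcB hab hac hbc
      (buchEdge_swap e12) (buchEdge_swap e13) (buchEdge_swap e23)).elim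

end S16

/-- Lemma 7 of the paper.  Let `I ⊆ ℝ[x,y,z]` be a monomial ideal minimally generated by
monomials `x^i z^{λ_i}` (`i ∈ A`) and `y^j z^{η_j}` (`j ∈ B`), with `λ` and `η` strictly
decreasing on `A` and `B` respectively (minimality: no generator divides another).  The
generators of the third syzygy of `I` correspond to the bounded faces of the (planar)
Buchberger graph, i.e. to triples of distinct generators which are pairwise Buchberger
edges, labeled by the lcm of the triple.  Then no two generators of the third syzygy have
the same `z`-degree: if the lcms of two such triples have equal `z`-exponent, the lcms
coincide. -/
theorem stmt_16 (A B : Set ℕ) (lam eta : ℕ → ℕ)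
    (hlam : StrictAntiOn lam A) (heta : StrictAntiOn eta B)
    (G : Set (ℕ × ℕ × ℕ))
    (hG : G = {g | ∃ i ∈ A, g = (i, 0, lam i)} ∪ {g | ∃ j ∈ B, g = (0, j, eta j)})
    (hmin : ∀ u ∈ G, ∀ v ∈ G, u ≠ v → ¬ dvd3 u v)
    (u₁ u₂ u₃ v₁ v₂ v₃ : ℕ × ℕ × ℕ)
    (hu₁ : u₁ ∈ G) (hu₂ : u₂ ∈ G) (hu₃ : u₃ ∈ G)
    (hv₁ : v₁ ∈ G) (hv₂ : v₂ ∈ G) (hv₃ : v₃ ∈ G)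
    (hu : u₁ ≠ u₂ ∧ u₁ ≠ u₃ ∧ u₂ ≠ u₃) (hv : v₁ ≠ v₂ ∧ v₁ ≠ v₃ ∧ v₂ ≠ v₃)
    (hue : buchEdge G u₁ u₂ ∧ buchEdge G u₁ u₃ ∧ buchEdge G u₂ u₃)
    (hve : buchEdge G v₁ v₂ ∧ buchEdge G v₁ v₃ ∧ buchEdge G v₂ v₃)
    (hz : (lcm3 u₁ (lcm3 u₂ u₃)).2.2 = (lcm3 v₁ (lcm3 v₂ v₃)).2.2) :
    lcm3 u₁ (lcm3 u₂ u₃) = lcm3 v₁ (lcm3 v₂ v₃) := by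

  obtain ⟨du12, du13, du23⟩ := hu
  obtain ⟨dv12, dv13, dv23⟩ := hv
  obtain ⟨eu12, eu13, eu23⟩ := hue
  obtain ⟨ev12, ev13, ev23⟩ := hve
  have E1 := S16.extract hlam heta hG hu₁ hu₂ hu₃ du12 du13 du23 eu12 eu13 eu23
  have E2 := S16.extract hlam heta hG hv₁ hv₂ hv₃ dv12 dv13 dv23 ev12 ev13 ev23
  rcases E1 with ⟨i1, i1', j1, Q1, hl1⟩ | ⟨j1, j1', i1, Q1, hl1⟩ <;>
    rcases E2 with ⟨i2, i2', j2, Q2, hl2⟩ | ⟨j2, j2', i2, Q2, hl2⟩ <;>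
      obtain ⟨hm1, hm1', hm1'', hlt1, hcon1, hej1, hmn1⟩ := Q1 <;>
        obtain ⟨hm2, hm2', hm2'', hlt2, hcon2, hej2, hmn2⟩ := Q2
  -- LL : both faces have two x-type generators
  · have hz' : lam i1 = lam i2 := by rw [hl1, hl2] at hz; exact hz
    have hii : i1 = i2 := by
      rcases lt_trichotomy i1 i2 with h | h | h
      · have := hlam hm1 hm2 h; omega
      · exact h
      · have := hlam hm2 hm1 h; omega
    have h1 : i1' = i2' := le_antisymm
      (hcon1 i2' hm2' (by omega)) (hcon2 i1' hm1' (by omega))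
    have h2 : j1 = j2 := le_antisymm
      (hmn1 j2 hm2'' (by omega)) (hmn2 j1 hm1'' (by omega))
    rw [hl1, hl2, h1, h2, hz']
  -- LR : mixed case
  · have hz' : lam i1 = eta j2 := by rw [hl1, hl2] at hz; exact hz
    have hii : i1 < i2 := by
      rcases lt_trichotomy i1 i2 with h | h | h
      · exact h
      · exfalso; rw [h] at hz'; omega
      · exfalso; have := hlam hm2'' hm1 h; omega
    have h1 : i1' = i2 := le_antisymm
      (hcon1 i2 hm2'' hii)
      (hmn2 i1' hm1' (by have := hlam hm1 hm1' hlt1; omega))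
    have hjj : j2 < j1 := by
      rcases lt_trichotomy j2 j1 with h | h | h
      · exact h
      · exfalso; rw [← h] at hej1; omega
      · exfalso; have := heta hm1'' hm2 h; omega
    have h2 : j1 = j2' := le_antisymm
      (hmn1 j2' hm2' (by have := heta hm2 hm2' hlt2; omega))
      (hcon2 j1 hm1'' hjj)
    rw [hl1, hl2, h1, h2, hz']
  -- RL : mixed case, other orientation
  · have hz' : eta j1 = lam i2 := by rw [hl1, hl2] at hz; exact hz
    have hjj : j1 < j2 := by
      rcases lt_trichotomy j1 j2 with h | h | h
      · exact h
      · exfalso; rw [h] at hz'; omega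
      · exfalso; have := heta hm2'' hm1 h; omega
    have h1 : j1' = j2 := le_antisymm
      (hcon1 j2 hm2'' hjj)
      (hmn2 j1' hm1' (by have := heta hm1 hm1' hlt1; omega))
    have hii : i2 < i1 := by
      rcases lt_trichotomy i2 i1 with h | h | h
      · exact h
      · exfalso; rw [← h] at hej1; omega
      · exfalso; have := hlam hm1'' hm2 h; omega
    have h2 : i1 = i2' := le_antisymm
      (hmn1 i2' hm2' (by have := hlam hm2 hm2' hlt2; omega))
      (hcon2 i1 hm1'' hii)
    rw [hl1, hl2, h1, h2, hz']
  -- RR : both faces have two y-type generators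
  · have hz' : eta j1 = eta j2 := by rw [hl1, hl2] at hz; exact hz
    have hjj : j1 = j2 := by
      rcases lt_trichotomy j1 j2 with h | h | h
      · have := heta hm1 hm2 h; omega
      · exact h
      · have := heta hm2 hm1 h; omega
    have h1 : j1' = j2' := le_antisymm
      (hcon1 j2' hm2' (by omega)) (hcon2 j1' hm1' (by omega))
    have h2 : i1 = i2 := le_antisymm
      (hmn1 i2 hm2'' (by omega)) (hmn2 i1 hm1'' (by omega))
    rw [hl1, hl2, h1, h2, hz']
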